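/- The transfer matrices of the five vertex model commute: for every α ∈ ℂ, every M ≥ 1, all nonzero inhomogeneity parameters w₁,…,w_M ∈ ℂ, and all nonzero u, v ∈ ℂ, one has τ(u,{w}) τ(v,{w}) = τ(v,{w}) τ(u,{w}) as endomorphisms of (ℂ²)^{⊗M}. -/

import Mathlib

open Matrix
open scoped Kronecker BigOperators

noncomputable section

def sM : Matrix (Fin 2) (Fin 2) ℂ := !![1, 0; 0, 0]
def nM : Matrix (Fin 2) (Fin 2) ℂ := !![0, 0; 0, 1]
def sigP : Matrix (Fin 2) (Fin 2) ℂ := !![0, 1; 0, 0]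
def sigM : Matrix (Fin 2) (Fin 2) ℂ := !![0, 0; 1, 0]

/-- The L-operator of the one-parameter family of five vertex models:
`L(u) = u·s⊗s + σ⁻⊗σ⁺ + σ⁺⊗σ⁻ + (αu−u⁻¹)·n⊗s + αu·n⊗n`, with the first factor the
auxiliary space and the second one the quantum space. -/
def Lmat (α u : ℂ) : Matrix (Fin 2 × Fin 2) (Fin 2 × Fin 2) ℂ :=
  u • (sM ⊗ₖ sM) + sigM ⊗ₖ sigP + sigP ⊗ₖ sigM + (α * u - u⁻¹) • (nM ⊗ₖ sM)
    + (α * u) • (nM ⊗ₖ nM)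

/-- The L-operator `L_{μ j}(u)` acting on the auxiliary space `W_μ = ℂ²` and the `j`-th
quantum factor of `(ℂ²)^{⊗M}` (and as identity on the other quantum factors). -/
def Lsite (α : ℂ) (M : ℕ) (u : ℂ) (j : Fin M) :
    Matrix (Fin 2 × (Fin M → Fin 2)) (Fin 2 × (Fin M → Fin 2)) ℂ :=
  fun p q => Lmat α u (p.1, p.2 j) (q.1, q.2 j) *
    (if ∀ i : Fin M, i ≠ j → p.2 i = q.2 i then 1 else 0)

/-- The monodromy matrix `T_μ(u,{w}) = ∏_{j=1}^M L_{μ j}(u/w_j)` on `W_μ ⊗ (ℂ²)^{⊗M}`. -/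
def monodromy (α : ℂ) (M : ℕ) (w : Fin M → ℂ) (u : ℂ) :
    Matrix (Fin 2 × (Fin M → Fin 2)) (Fin 2 × (Fin M → Fin 2)) ℂ :=
  ((List.finRange M).map (fun j => Lsite α M (u / w j) j)).prod

/-- The transfer matrix `τ(u,{w}) = Tr_{W_μ} T_μ(u,{w})` acting on `(ℂ²)^{⊗M}`. -/
def transfer (α : ℂ) (M : ℕ) (w : Fin M → ℂ) (u : ℂ) :
    Matrix (Fin M → Fin 2) (Fin M → Fin 2) ℂ :=
  fun x y => ∑ a : Fin 2, monodromy α M w u (a, x) (a, y)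

/-! ### Auxiliary development: RLL relation and commutation of transfer matrices -/

namespace FiveVertexAux

/-- Entrywise form of the L-operator. -/
def LmatE (α u : ℂ) : Matrix (Fin 2 × Fin 2) (Fin 2 × Fin 2) ℂ :=
  fun p q =>
    ![![![![u, 0], ![0, 0]], ![![0, 0], ![1, 0]]],
      ![![![0, 1], ![α * u - u⁻¹, 0]], ![![0, 0], ![0, α * u]]]] p.1 p.2 q.1 q.2

lemma Lmat_eq (α u : ℂ) : Lmat α u = LmatE α u := by
  ext ⟨a, s⟩ ⟨c, t⟩
  fin_cases a <;> fin_cases s <;> fin_cases c <;> fin_cases t <;>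
    simp [Lmat, LmatE, sM, nM, sigP, sigM]

/-- The R-matrix of the five vertex model (`k = v/u`). -/
def Rm (k : ℂ) : Matrix (Fin 2 × Fin 2) (Fin 2 × Fin 2) ℂ :=
  fun p q =>
    ![![![![1, 0], ![0, 0]], ![![0, 0], ![k, 0]]],
      ![![![0, k], ![1 - k ^ 2, 0]], ![![0, 0], ![0, 1]]]] p.1 p.2 q.1 q.2

/-- The inverse of the R-matrix. -/
def RmInv (k : ℂ) : Matrix (Fin 2 × Fin 2) (Fin 2 × Fin 2) ℂ :=
  fun p q =>
    ![![![![1, 0], ![0, 0]], ![![0, 1 - (k⁻¹) ^ 2], ![k⁻¹, 0]]],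
      ![![![0, k⁻¹], ![0, 0]], ![![0, 0], ![0, 1]]]] p.1 p.2 q.1 q.2

/-- Embedding of a matrix on the doubled auxiliary space, acting trivially on the
quantum space. -/
def e0 (R : Matrix (Fin 2 × Fin 2) (Fin 2 × Fin 2) ℂ) :
    Matrix ((Fin 2 × Fin 2) × Fin 2) ((Fin 2 × Fin 2) × Fin 2) ℂ :=
  fun p q => R p.1 q.1 * (if p.2 = q.2 then 1 else 0)

/-- Embedding of a matrix on (first auxiliary space) × (quantum space). -/
def e1 (X : Matrix (Fin 2 × Fin 2) (Fin 2 × Fin 2) ℂ) :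
    Matrix ((Fin 2 × Fin 2) × Fin 2) ((Fin 2 × Fin 2) × Fin 2) ℂ :=
  fun p q => (if p.1.2 = q.1.2 then 1 else 0) * X (p.1.1, p.2) (q.1.1, q.2)

/-- Embedding of a matrix on (second auxiliary space) × (quantum space). -/
def e2 (X : Matrix (Fin 2 × Fin 2) (Fin 2 × Fin 2) ℂ) :
    Matrix ((Fin 2 × Fin 2) × Fin 2) ((Fin 2 × Fin 2) × Fin 2) ℂ :=
  fun p q => (if p.1.1 = q.1.1 then 1 else 0) * X (p.1.2, p.2) (q.1.2, q.2)

lemma RmInv_mul_Rm (k : ℂ) (hk : k ≠ 0) : RmInv k * Rm k = 1 := by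
  ext ⟨a, b⟩ ⟨c, d⟩
  fin_cases a <;> fin_cases b <;> fin_cases c <;> fin_cases d <;>
    · simp [Matrix.mul_apply, Fintype.sum_prod_type, Fin.sum_univ_two, Rm, RmInv,
        Matrix.one_apply, Prod.ext_iff]
      try field_simp
      try ring

lemma Rm_mul_RmInv (k : ℂ) (hk : k ≠ 0) : Rm k * RmInv k = 1 := by
  ext ⟨a, b⟩ ⟨c, d⟩
  fin_cases a <;> fin_cases b <;> fin_cases c <;> fin_cases d <;>
    · simp [Matrix.mul_apply, Fintype.sum_prod_type, Fin.sum_univ_two, Rm, RmInv,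
        Matrix.one_apply, Prod.ext_iff]
      try field_simp
      try ring

lemma e0_e1_e2_entry (R X Y : Matrix (Fin 2 × Fin 2) (Fin 2 × Fin 2) ℂ) (a b s c d t : Fin 2) :
    (e0 R * e1 X * e2 Y) ((a, b), s) ((c, d), t)
      = ∑ e : Fin 2, ∑ f : Fin 2, ∑ z : Fin 2,
          R (a, b) (e, f) * X (e, s) (c, z) * Y (f, z) (d, t) := by
  simp only [Matrix.mul_apply, Fintype.sum_prod_type, e0, e1, e2]
  simp [Finset.sum_ite_eq, Finset.sum_ite_eq', ite_mul, mul_ite, mul_zero, zero_mul,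
    Finset.mul_sum, Finset.sum_mul, mul_assoc]
  try ring

lemma e2_e1_e0_entry (R X Y : Matrix (Fin 2 × Fin 2) (Fin 2 × Fin 2) ℂ) (a b s c d t : Fin 2) :
    (e2 Y * e1 X * e0 R) ((a, b), s) ((c, d), t)
      = ∑ e : Fin 2, ∑ f : Fin 2, ∑ z : Fin 2,
          Y (b, s) (f, z) * X (a, z) (e, t) * R (e, f) (c, d) := by
  simp only [Matrix.mul_apply, Fintype.sum_prod_type, e0, e1, e2]
  simp [Finset.sum_ite_eq, Finset.sum_ite_eq', ite_mul, mul_ite, mul_zero, zero_mul,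
    Finset.mul_sum, Finset.sum_mul, mul_assoc]
  try ring

set_option maxHeartbeats 1600000 in
/-- The RLL relation for the five vertex model. -/
lemma RLL (α a b : ℂ) (ha : a ≠ 0) (hb : b ≠ 0) :
    e0 (Rm (b / a)) * e1 (LmatE α a) * e2 (LmatE α b)
      = e2 (LmatE α b) * e1 (LmatE α a) * e0 (Rm (b / a)) := by
  ext ⟨⟨p1, p2⟩, s⟩ ⟨⟨q1, q2⟩, t⟩
  rw [e0_e1_e2_entry, e2_e1_e0_entry]
  fin_cases p1 <;> fin_cases p2 <;> fin_cases s <;> fin_cases q1 <;> fin_cases q2 <;> fin_cases t <;>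
    · simp only [Fin.sum_univ_two, Rm, LmatE, Matrix.cons_val_zero, Matrix.cons_val_one,
        Matrix.head_cons, Fin.isValue, Fin.zero_eta, Fin.mk_one, mul_zero, zero_mul, mul_one, one_mul, add_zero, zero_add]
      first
        | done
        | rfl
        | (field_simp; try ring)

/-! ### Local operators on the chain -/

variable {M : ℕ}

/-- A local operator: `A` acts on (auxiliary data `P`) × (site `j`), identity elsewhere. -/
def loc {P : Type*} (A : Matrix (P × Fin 2) (P × Fin 2) ℂ) (j : Fin M) :
    Matrix (P × (Fin M → Fin 2)) (P × (Fin M → Fin 2)) ℂ :=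
  fun p q => A (p.1, p.2 j) (q.1, q.2 j) * (if ∀ i, i ≠ j → p.2 i = q.2 i then 1 else 0)

lemma indicator_sum (j : Fin M) (x z : Fin M → Fin 2) :
    (if ∀ i, i ≠ j → x i = z i then (1 : ℂ) else 0)
      = ∑ t : Fin 2, if z = Function.update x j t then 1 else 0 := by
  by_cases h : ∀ i, i ≠ j → x i = z i
  · rw [if_pos h]
    have hz : z = Function.update x j (z j) := by
      funext i
      by_cases hi : i = j
      · subst hi; simp
      · rw [Function.update_of_ne hi]; exact (h i hi).symm
    rw [Finset.sum_eq_single (z j)]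
    · rw [if_pos hz]
    · intro t _ ht
      rw [if_neg]
      intro e
      exact ht (by rw [e]; simp)
    · simp
  · rw [if_neg h]
    symm
    apply Finset.sum_eq_zero
    intro t _
    rw [if_neg]
    intro e
    exact h (fun i hi => by rw [e, Function.update_of_ne hi])

lemma sum_Q (j : Fin M) (x : Fin M → Fin 2) (g : (Fin M → Fin 2) → ℂ) :
    ∑ z : Fin M → Fin 2, (if ∀ i, i ≠ j → x i = z i then (1 : ℂ) else 0) * g z
      = ∑ t : Fin 2, g (Function.update x j t) := by
  simp_rw [indicator_sum, Finset.sum_mul]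
  rw [Finset.sum_comm]
  refine Finset.sum_congr rfl fun t _ => ?_
  rw [Finset.sum_eq_single (Function.update x j t)]
  · simp
  · intro z _ hz; simp [hz]
  · simp

lemma ind_update (j : Fin M) (x y : Fin M → Fin 2) (t : Fin 2) :
    (if ∀ i, i ≠ j → Function.update x j t i = y i then (1 : ℂ) else 0)
      = if ∀ i, i ≠ j → x i = y i then 1 else 0 := by
  refine if_congr ?_ rfl rfl
  refine forall_congr' fun i => imp_congr_right fun hi => ?_
  rw [Function.update_of_ne hi]

lemma ind_split {j k : Fin M} (hjk : j ≠ k) (x y : Fin M → Fin 2) (t : Fin 2) :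
    (if ∀ i, i ≠ k → Function.update x j t i = y i then (1 : ℂ) else 0)
      = (if t = y j then 1 else 0) * (if ∀ i, i ≠ j → i ≠ k → x i = y i then 1 else 0) := by
  by_cases h : ∀ i, i ≠ k → Function.update x j t i = y i
  · rw [if_pos h]
    have h1 : t = y j := by
      have := h j hjk; rwa [Function.update_self] at this
    have h2 : ∀ i, i ≠ j → i ≠ k → x i = y i := by
      intro i hij hik
      have := h i hik; rwa [Function.update_of_ne hij] at this
    rw [if_pos h1, if_pos h2, one_mul]
  · rw [if_neg h]
    by_cases h1 : t = y j
    · by_cases h2 : ∀ i, i ≠ j → i ≠ k → x i = y i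
      · exfalso
        apply h
        intro i hik
        by_cases hij : i = j
        · subst hij; rw [Function.update_self]; exact h1
        · rw [Function.update_of_ne hij]; exact h2 i hij hik
      · rw [if_neg h2, mul_zero]
    · rw [if_neg h1, zero_mul]

lemma ite_funext (j : Fin M) (x y : Fin M → Fin 2) :
    (if x j = y j then (1 : ℂ) else 0) * (if ∀ i, i ≠ j → x i = y i then 1 else 0)
      = if x = y then 1 else 0 := by
  by_cases h : x = y
  · subst h; simp
  · rw [if_neg h]
    by_cases h1 : x j = y j
    · rw [if_pos h1, if_neg, one_mul]
      intro hall
      exact h (funext fun i => by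
        by_cases hi : i = j
        · subst hi; exact h1
        · exact hall i hi)
    · rw [if_neg h1, zero_mul]

lemma loc_mul {P : Type*} [Fintype P] (A B : Matrix (P × Fin 2) (P × Fin 2) ℂ) (j : Fin M) :
    loc A j * loc B j = loc (A * B) j := by
  ext ⟨p, x⟩ ⟨q, y⟩
  simp only [Matrix.mul_apply, loc, Fintype.sum_prod_type]
  rw [Finset.sum_comm]
  have step1 : ∀ z : Fin M → Fin 2,
      (∑ r : P, (A (p, x j) (r, z j) * (if ∀ i, i ≠ j → x i = z i then (1:ℂ) else 0)) *
        (B (r, z j) (q, y j) * (if ∀ i, i ≠ j → z i = y i then 1 else 0)))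
      = (if ∀ i, i ≠ j → x i = z i then (1:ℂ) else 0) *
          ((∑ r : P, A (p, x j) (r, z j) * B (r, z j) (q, y j)) *
            (if ∀ i, i ≠ j → z i = y i then 1 else 0)) := by
    intro z
    rw [Finset.sum_mul, Finset.mul_sum]
    exact Finset.sum_congr rfl fun r _ => by ring
  simp_rw [step1]
  rw [sum_Q]
  have step2 : ∀ t : Fin 2,
      (∑ r : P, A (p, x j) (r, Function.update x j t j) * B (r, Function.update x j t j) (q, y j)) *
          (if ∀ i, i ≠ j → Function.update x j t i = y i then (1:ℂ) else 0)
      = (∑ r : P, A (p, x j) (r, t) * B (r, t) (q, y j)) *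
          (if ∀ i, i ≠ j → x i = y i then (1:ℂ) else 0) := by
    intro t
    rw [ind_update]
    simp
  simp_rw [step2]
  rw [← Finset.sum_mul]
  congr 1
  exact Finset.sum_comm

lemma ind_swap (j k : Fin M) (x y : Fin M → Fin 2) :
    (if ∀ i, i ≠ k → i ≠ j → x i = y i then (1:ℂ) else 0)
      = if ∀ i, i ≠ j → i ≠ k → x i = y i then 1 else 0 := by
  refine if_congr ⟨fun h i h1 h2 => h i h2 h1, fun h i h1 h2 => h i h2 h1⟩ rfl rfl

lemma loc_entry_12 (X Y : Matrix (Fin 2 × Fin 2) (Fin 2 × Fin 2) ℂ) {j k : Fin M}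
    (hjk : j ≠ k) (a b c d : Fin 2) (x y : Fin M → Fin 2) :
    (loc (e1 X) j * loc (e2 Y) k) (((a, b), x)) (((c, d), y))
      = X (a, x j) (c, y j) * Y (b, x k) (d, y k) *
          (if ∀ i, i ≠ j → i ≠ k → x i = y i then 1 else 0) := by
  simp only [Matrix.mul_apply, loc, e1, e2, Fintype.sum_prod_type]
  rw [Finset.sum_eq_single c]
  rotate_left
  · intro e _ hec
    apply Finset.sum_eq_zero; intro f _
    apply Finset.sum_eq_zero; intro z _
    simp [hec]
  · intro h; exact absurd (Finset.mem_univ c) h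
  rw [Finset.sum_eq_single b]
  rotate_left
  · intro f _ hfb
    apply Finset.sum_eq_zero; intro z _
    simp [Ne.symm hfb]
  · intro h; exact absurd (Finset.mem_univ b) h
  trans (∑ z : Fin M → Fin 2, (if ∀ i, i ≠ j → x i = z i then (1:ℂ) else 0) *
      (X (a, x j) (c, z j) * (Y (b, z k) (d, y k) *
        (if ∀ i, i ≠ k → z i = y i then (1:ℂ) else 0))))
  · refine Finset.sum_congr rfl fun z _ => ?_
    simp only [eq_self_iff_true, if_true, one_mul]
    ring
  rw [sum_Q]
  trans (∑ t : Fin 2, X (a, x j) (c, t) * (Y (b, x k) (d, y k) *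
      ((if t = y j then (1:ℂ) else 0) * (if ∀ i, i ≠ j → i ≠ k → x i = y i then (1:ℂ) else 0))))
  · refine Finset.sum_congr rfl fun t _ => ?_
    rw [Function.update_self, Function.update_of_ne (Ne.symm hjk), ind_split hjk]
  rw [Finset.sum_eq_single (y j)]
  rotate_left
  · intro t _ ht
    simp [ht]
  · intro h; exact absurd (Finset.mem_univ (y j)) h
  simp only [eq_self_iff_true, if_true, one_mul]
  ring

lemma loc_entry_21 (X Y : Matrix (Fin 2 × Fin 2) (Fin 2 × Fin 2) ℂ) {j k : Fin M}
    (hjk : j ≠ k) (a b c d : Fin 2) (x y : Fin M → Fin 2) :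
    (loc (e2 Y) k * loc (e1 X) j) (((a, b), x)) (((c, d), y))
      = X (a, x j) (c, y j) * Y (b, x k) (d, y k) *
          (if ∀ i, i ≠ j → i ≠ k → x i = y i then 1 else 0) := by
  simp only [Matrix.mul_apply, loc, e1, e2, Fintype.sum_prod_type]
  rw [Finset.sum_eq_single a]
  rotate_left
  · intro e _ hea
    apply Finset.sum_eq_zero; intro f _
    apply Finset.sum_eq_zero; intro z _
    simp [Ne.symm hea]
  · intro h; exact absurd (Finset.mem_univ a) h
  rw [Finset.sum_eq_single d]
  rotate_left
  · intro f _ hfd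
    apply Finset.sum_eq_zero; intro z _
    simp [hfd]
  · intro h; exact absurd (Finset.mem_univ d) h
  trans (∑ z : Fin M → Fin 2, (if ∀ i, i ≠ k → x i = z i then (1:ℂ) else 0) *
      (Y (b, x k) (d, z k) * (X (a, z j) (c, y j) *
        (if ∀ i, i ≠ j → z i = y i then (1:ℂ) else 0))))
  · refine Finset.sum_congr rfl fun z _ => ?_
    simp only [eq_self_iff_true, if_true, one_mul]
    ring
  rw [sum_Q]
  trans (∑ t : Fin 2, Y (b, x k) (d, t) * (X (a, x j) (c, y j) *
      ((if t = y k then (1:ℂ) else 0) * (if ∀ i, i ≠ k → i ≠ j → x i = y i then (1:ℂ) else 0))))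
  · refine Finset.sum_congr rfl fun t _ => ?_
    rw [Function.update_self, Function.update_of_ne hjk, ind_split (Ne.symm hjk)]
  rw [Finset.sum_eq_single (y k)]
  rotate_left
  · intro t _ ht
    simp [ht]
  · intro h; exact absurd (Finset.mem_univ (y k)) h
  rw [ind_swap]
  simp only [eq_self_iff_true, if_true, one_mul]
  ring

lemma loc_comm (X Y : Matrix (Fin 2 × Fin 2) (Fin 2 × Fin 2) ℂ) {j k : Fin M} (hjk : j ≠ k) :
    loc (e1 X) j * loc (e2 Y) k = loc (e2 Y) k * loc (e1 X) j := by
  ext ⟨⟨a, b⟩, x⟩ ⟨⟨c, d⟩, y⟩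
  rw [loc_entry_12 X Y hjk, loc_entry_21 X Y hjk]

/-- The R-matrix acting on the doubled auxiliary space, identity on the whole chain. -/
def RB (R : Matrix (Fin 2 × Fin 2) (Fin 2 × Fin 2) ℂ) :
    Matrix ((Fin 2 × Fin 2) × (Fin M → Fin 2)) ((Fin 2 × Fin 2) × (Fin M → Fin 2)) ℂ :=
  fun p q => R p.1 q.1 * (if p.2 = q.2 then 1 else 0)

lemma loc_e0 (R : Matrix (Fin 2 × Fin 2) (Fin 2 × Fin 2) ℂ) (j : Fin M) :
    loc (e0 R) j = RB R := by
  ext ⟨p, x⟩ ⟨q, y⟩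
  simp only [loc, e0, RB]
  rw [mul_assoc, ite_funext]

lemma RB_mul (R S : Matrix (Fin 2 × Fin 2) (Fin 2 × Fin 2) ℂ) :
    RB (M := M) R * RB S = RB (R * S) := by
  ext ⟨p, x⟩ ⟨q, y⟩
  simp only [Matrix.mul_apply, RB]
  rw [Fintype.sum_prod_type]
  simp [ite_mul, mul_ite, mul_zero, zero_mul, Finset.sum_ite_eq, Finset.sum_ite_eq',
    Finset.sum_mul]

lemma RB_one : RB (M := M) 1 = 1 := by
  ext ⟨p, x⟩ ⟨q, y⟩
  simp only [RB, Matrix.one_apply, Prod.mk.injEq]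
  split_ifs <;> simp_all

/-- Partial trace over the doubled auxiliary space. -/
def ptr (Z : Matrix ((Fin 2 × Fin 2) × (Fin M → Fin 2)) ((Fin 2 × Fin 2) × (Fin M → Fin 2)) ℂ) :
    Matrix (Fin M → Fin 2) (Fin M → Fin 2) ℂ :=
  fun x y => ∑ p : Fin 2 × Fin 2, Z (p, x) (p, y)

lemma ptr_RB_comm (R : Matrix (Fin 2 × Fin 2) (Fin 2 × Fin 2) ℂ)
    (Z : Matrix ((Fin 2 × Fin 2) × (Fin M → Fin 2)) ((Fin 2 × Fin 2) × (Fin M → Fin 2)) ℂ) :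
    ptr (RB R * Z) = ptr (Z * RB R) := by
  funext x y
  simp only [ptr, Matrix.mul_apply]
  have inner1 : ∀ p : Fin 2 × Fin 2,
      (∑ q : (Fin 2 × Fin 2) × (Fin M → Fin 2), RB R (p, x) q * Z q (p, y))
        = ∑ r : Fin 2 × Fin 2, R p r * Z (r, x) (p, y) := by
    intro p
    rw [Fintype.sum_prod_type]
    simp only [RB]
    simp [mul_ite, ite_mul, mul_zero, zero_mul, Finset.sum_ite_eq, Finset.sum_ite_eq']
  have inner2 : ∀ p : Fin 2 × Fin 2,
      (∑ q : (Fin 2 × Fin 2) × (Fin M → Fin 2), Z (p, x) q * RB R q (p, y))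
        = ∑ r : Fin 2 × Fin 2, Z (p, x) (r, y) * R r p := by
    intro p
    rw [Fintype.sum_prod_type]
    simp only [RB]
    simp [mul_ite, ite_mul, mul_zero, zero_mul, Finset.sum_ite_eq, Finset.sum_ite_eq']
  simp_rw [inner1, inner2]
  rw [Finset.sum_comm]
  exact Finset.sum_congr rfl fun p _ => Finset.sum_congr rfl fun r _ => by ring

/-- Global embedding for the first auxiliary space. -/
def E1 (T : Matrix (Fin 2 × (Fin M → Fin 2)) (Fin 2 × (Fin M → Fin 2)) ℂ) :
    Matrix ((Fin 2 × Fin 2) × (Fin M → Fin 2)) ((Fin 2 × Fin 2) × (Fin M → Fin 2)) ℂ :=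
  fun p q => (if p.1.2 = q.1.2 then 1 else 0) * T (p.1.1, p.2) (q.1.1, q.2)

/-- Global embedding for the second auxiliary space. -/
def E2 (T : Matrix (Fin 2 × (Fin M → Fin 2)) (Fin 2 × (Fin M → Fin 2)) ℂ) :
    Matrix ((Fin 2 × Fin 2) × (Fin M → Fin 2)) ((Fin 2 × Fin 2) × (Fin M → Fin 2)) ℂ :=
  fun p q => (if p.1.1 = q.1.1 then 1 else 0) * T (p.1.2, p.2) (q.1.2, q.2)

lemma E1_mul (S T : Matrix (Fin 2 × (Fin M → Fin 2)) (Fin 2 × (Fin M → Fin 2)) ℂ) :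
    E1 (S * T) = E1 S * E1 T := by
  ext ⟨⟨a, b⟩, x⟩ ⟨⟨c, d⟩, y⟩
  simp only [Matrix.mul_apply, E1, Fintype.sum_prod_type]
  simp only [ite_mul, mul_ite, mul_zero, zero_mul, mul_one, one_mul,
    Finset.sum_ite_eq, Finset.sum_ite_eq', Finset.mem_univ, if_true]
  by_cases h : b = d
  · simp [h, Finset.mul_sum]
  · simp [h]

lemma E2_mul (S T : Matrix (Fin 2 × (Fin M → Fin 2)) (Fin 2 × (Fin M → Fin 2)) ℂ) :
    E2 (S * T) = E2 S * E2 T := by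
  ext ⟨⟨a, b⟩, x⟩ ⟨⟨c, d⟩, y⟩
  simp only [Matrix.mul_apply, E2, Fintype.sum_prod_type]
  simp only [ite_mul, mul_ite, mul_zero, zero_mul, mul_one, one_mul,
    Finset.sum_ite_eq, Finset.sum_ite_eq', Finset.mem_univ, if_true]
  by_cases h : a = c
  · simp [h, Finset.mul_sum]
  · simp [h]

lemma E1_one : E1 (M := M) 1 = 1 := by
  ext ⟨⟨a, b⟩, x⟩ ⟨⟨c, d⟩, y⟩
  simp only [E1, Matrix.one_apply, Prod.mk.injEq]
  split_ifs <;> simp_all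

lemma E2_one : E2 (M := M) 1 = 1 := by
  ext ⟨⟨a, b⟩, x⟩ ⟨⟨c, d⟩, y⟩
  simp only [E2, Matrix.one_apply, Prod.mk.injEq]
  split_ifs <;> simp_all

lemma E1_Lsite (α uu : ℂ) (j : Fin M) :
    E1 (Lsite α M uu j) = loc (e1 (Lmat α uu)) j := by
  ext ⟨⟨a, b⟩, x⟩ ⟨⟨c, d⟩, y⟩
  simp only [E1, Lsite, loc, e1]
  ring

lemma E2_Lsite (α uu : ℂ) (j : Fin M) :
    E2 (Lsite α M uu j) = loc (e2 (Lmat α uu)) j := by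
  ext ⟨⟨a, b⟩, x⟩ ⟨⟨c, d⟩, y⟩
  simp only [E2, Lsite, loc, e2]
  ring

lemma E1_monodromy (α u : ℂ) (w : Fin M → ℂ) :
    E1 (monodromy α M w u)
      = ((List.finRange M).map (fun j => loc (e1 (Lmat α (u / w j))) j)).prod := by
  unfold monodromy
  generalize (List.finRange M) = l
  induction l with
  | nil => simpa using E1_one
  | cons j t ih => simp only [List.map_cons, List.prod_cons, E1_mul, ih, E1_Lsite]

lemma E2_monodromy (α u : ℂ) (w : Fin M → ℂ) :
    E2 (monodromy α M w u)
      = ((List.finRange M).map (fun j => loc (e2 (Lmat α (u / w j))) j)).prod := by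
  unfold monodromy
  generalize (List.finRange M) = l
  induction l with
  | nil => simpa using E2_one
  | cons j t ih => simp only [List.map_cons, List.prod_cons, E2_mul, ih, E2_Lsite]

lemma key (α u v : ℂ) (w : Fin M → ℂ) (hw : ∀ j, w j ≠ 0) (hu : u ≠ 0) (hv : v ≠ 0)
    (l : List (Fin M)) (hl : l.Nodup) :
    RB (Rm (v / u)) * (l.map (fun j => loc (e1 (Lmat α (u / w j))) j)).prod *
        (l.map (fun j => loc (e2 (Lmat α (v / w j))) j)).prod
      = (l.map (fun j => loc (e2 (Lmat α (v / w j))) j)).prod *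
        (l.map (fun j => loc (e1 (Lmat α (u / w j))) j)).prod * RB (Rm (v / u)) := by
  induction l with
  | nil => simp
  | cons j t ih =>
    obtain ⟨hj, ht⟩ := List.nodup_cons.mp hl
    have site : RB (Rm (v / u)) * loc (e1 (Lmat α (u / w j))) j * loc (e2 (Lmat α (v / w j))) j
        = loc (e2 (Lmat α (v / w j))) j * loc (e1 (Lmat α (u / w j))) j * RB (Rm (v / u)) := by
      have hk : (v / w j) / (u / w j) = v / u := by
        have hwj := hw j
        field_simp
      have hR := RLL α (u / w j) (v / w j) (div_ne_zero hu (hw j)) (div_ne_zero hv (hw j))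
      rw [hk] at hR
      rw [← loc_e0 (Rm (v / u)) j, Lmat_eq α (u / w j), Lmat_eq α (v / w j),
        loc_mul, loc_mul, loc_mul, loc_mul, hR]
    have hc1 : (t.map (fun i => loc (e1 (Lmat α (u / w i))) i)).prod *
          loc (e2 (Lmat α (v / w j))) j
        = loc (e2 (Lmat α (v / w j))) j *
            (t.map (fun i => loc (e1 (Lmat α (u / w i))) i)).prod := by
      refine (Commute.list_prod_left _ _ fun z hz => ?_).eq
      obtain ⟨i, hit, rfl⟩ := List.mem_map.mp hz
      exact loc_comm _ _ (fun h => hj (h ▸ hit))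
    have hc2 : loc (e1 (Lmat α (u / w j))) j *
          (t.map (fun i => loc (e2 (Lmat α (v / w i))) i)).prod
        = (t.map (fun i => loc (e2 (Lmat α (v / w i))) i)).prod *
            loc (e1 (Lmat α (u / w j))) j := by
      refine (Commute.list_prod_right _ _ fun z hz => ?_).eq
      obtain ⟨i, hit, rfl⟩ := List.mem_map.mp hz
      exact loc_comm _ _ (fun h => hj (h ▸ hit))
    have iht := ih ht
    simp only [List.map_cons, List.prod_cons]
    set A := loc (e1 (Lmat α (u / w j))) j with hA
    set B := loc (e2 (Lmat α (v / w j))) j with hB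
    set P := (t.map (fun i => loc (e1 (Lmat α (u / w i))) i)).prod with hP
    set Q := (t.map (fun i => loc (e2 (Lmat α (v / w i))) i)).prod with hQ
    set RR := RB (M := M) (Rm (v / u)) with hRR
    calc RR * (A * P) * (B * Q)
        = RR * A * (P * B) * Q := by noncomm_ring
      _ = RR * A * (B * P) * Q := by rw [hc1]
      _ = (RR * A * B) * (P * Q) := by noncomm_ring
      _ = (B * A * RR) * (P * Q) := by rw [site]
      _ = B * A * (RR * P * Q) := by noncomm_ring
      _ = B * A * (Q * P * RR) := by rw [iht]
      _ = B * (A * Q) * (P * RR) := by noncomm_ring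
      _ = B * (Q * A) * (P * RR) := by rw [hc2]
      _ = (B * Q) * (A * P) * RR := by noncomm_ring

lemma ptr_E1_E2 (S T : Matrix (Fin 2 × (Fin M → Fin 2)) (Fin 2 × (Fin M → Fin 2)) ℂ)
    (x y : Fin M → Fin 2) :
    ptr (E1 S * E2 T) x y
      = ∑ z : Fin M → Fin 2, (∑ a : Fin 2, S (a, x) (a, z)) * (∑ b : Fin 2, T (b, z) (b, y)) := by
  simp only [ptr, Matrix.mul_apply, E1, E2, Fintype.sum_prod_type]
  simp only [ite_mul, mul_ite, mul_zero, zero_mul, mul_one, one_mul,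
    Finset.sum_ite_eq, Finset.sum_ite_eq', Finset.mem_univ, if_true]
  trans (∑ a : Fin 2, ∑ b : Fin 2, ∑ z : Fin M → Fin 2, S (a, x) (a, z) * T (b, z) (b, y))
  · refine Finset.sum_congr rfl fun a _ => Finset.sum_congr rfl fun b _ => ?_
    rw [Finset.sum_eq_single a]
    · rw [Finset.sum_eq_single b]
      · simp
      · intro f _ hf
        apply Finset.sum_eq_zero; intro z _
        simp [Ne.symm hf]
      · simp
    · intro e _ he
      apply Finset.sum_eq_zero; intro f _
      apply Finset.sum_eq_zero; intro z _
      simp [he]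
    · simp
  trans (∑ a : Fin 2, ∑ z : Fin M → Fin 2, ∑ b : Fin 2, S (a, x) (a, z) * T (b, z) (b, y))
  · exact Finset.sum_congr rfl fun a _ => Finset.sum_comm
  rw [Finset.sum_comm]
  refine Finset.sum_congr rfl fun z _ => ?_
  rw [Finset.sum_mul]
  exact Finset.sum_congr rfl fun a _ => (Finset.mul_sum _ _ _).symm

lemma ptr_E2_E1 (S T : Matrix (Fin 2 × (Fin M → Fin 2)) (Fin 2 × (Fin M → Fin 2)) ℂ)
    (x y : Fin M → Fin 2) :
    ptr (E2 T * E1 S) x y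
      = ∑ z : Fin M → Fin 2, (∑ b : Fin 2, T (b, x) (b, z)) * (∑ a : Fin 2, S (a, z) (a, y)) := by
  simp only [ptr, Matrix.mul_apply, E1, E2, Fintype.sum_prod_type]
  simp only [ite_mul, mul_ite, mul_zero, zero_mul, mul_one, one_mul,
    Finset.sum_ite_eq, Finset.sum_ite_eq', Finset.mem_univ, if_true]
  trans (∑ a : Fin 2, ∑ b : Fin 2, ∑ z : Fin M → Fin 2, T (b, x) (b, z) * S (a, z) (a, y))
  · refine Finset.sum_congr rfl fun a _ => Finset.sum_congr rfl fun b _ => ?_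
    rw [Finset.sum_eq_single a]
    · rw [Finset.sum_eq_single b]
      · simp
      · intro f _ hf
        apply Finset.sum_eq_zero; intro z _
        simp [hf]
      · simp
    · intro e _ he
      apply Finset.sum_eq_zero; intro f _
      apply Finset.sum_eq_zero; intro z _
      simp [Ne.symm he]
    · simp
  trans (∑ b : Fin 2, ∑ a : Fin 2, ∑ z : Fin M → Fin 2, T (b, x) (b, z) * S (a, z) (a, y))
  · exact Finset.sum_comm
  trans (∑ b : Fin 2, ∑ z : Fin M → Fin 2, ∑ a : Fin 2, T (b, x) (b, z) * S (a, z) (a, y))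
  · exact Finset.sum_congr rfl fun b _ => Finset.sum_comm
  rw [Finset.sum_comm]
  refine Finset.sum_congr rfl fun z _ => ?_
  rw [Finset.sum_mul]
  exact Finset.sum_congr rfl fun b _ => (Finset.mul_sum _ _ _).symm

end FiveVertexAux

open FiveVertexAux in
/-- The transfer matrices of the five vertex model commute:
`τ(u,{w}) τ(v,{w}) = τ(v,{w}) τ(u,{w})`. -/
theorem transfer_matrices_commute (α : ℂ) (M : ℕ) (hM : 1 ≤ M)
    (w : Fin M → ℂ) (hw : ∀ j, w j ≠ 0) (u v : ℂ) (hu : u ≠ 0) (hv : v ≠ 0) :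
    transfer α M w u * transfer α M w v = transfer α M w v * transfer α M w u := by
  have hk : v / u ≠ 0 := div_ne_zero hv hu
  have inv1 : RB (M := M) (RmInv (v / u)) * RB (Rm (v / u)) = 1 := by
    rw [RB_mul, RmInv_mul_Rm _ hk, RB_one]
  have inv2 : RB (M := M) (Rm (v / u)) * RB (RmInv (v / u)) = 1 := by
    rw [RB_mul, Rm_mul_RmInv _ hk, RB_one]
  have kk := key α u v w hw hu hv (List.finRange M) (List.nodup_finRange M)
  rw [← E1_monodromy α u w, ← E2_monodromy α v w] at kk
  have main : ptr (E1 (monodromy α M w u) * E2 (monodromy α M w v))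
      = ptr (E2 (monodromy α M w v) * E1 (monodromy α M w u)) := by
    calc ptr (E1 (monodromy α M w u) * E2 (monodromy α M w v))
        = ptr (RB (RmInv (v / u)) *
            (RB (Rm (v / u)) * E1 (monodromy α M w u) * E2 (monodromy α M w v))) := by
          rw [show RB (RmInv (v / u)) *
              (RB (Rm (v / u)) * E1 (monodromy α M w u) * E2 (monodromy α M w v))
            = (RB (RmInv (v / u)) * RB (Rm (v / u))) *
                (E1 (monodromy α M w u) * E2 (monodromy α M w v)) from by noncomm_ring,
            inv1, one_mul]
      _ = ptr (RB (RmInv (v / u)) *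
            (E2 (monodromy α M w v) * E1 (monodromy α M w u) * RB (Rm (v / u)))) := by
          rw [kk]
      _ = ptr ((E2 (monodromy α M w v) * E1 (monodromy α M w u) * RB (Rm (v / u))) *
            RB (RmInv (v / u))) := ptr_RB_comm _ _
      _ = ptr (E2 (monodromy α M w v) * E1 (monodromy α M w u)) := by
          rw [show (E2 (monodromy α M w v) * E1 (monodromy α M w u) * RB (Rm (v / u))) *
              RB (RmInv (v / u))
            = (E2 (monodromy α M w v) * E1 (monodromy α M w u)) *
                (RB (Rm (v / u)) * RB (RmInv (v / u))) from by noncomm_ring,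
            inv2, mul_one]
  ext x y
  rw [Matrix.mul_apply, Matrix.mul_apply]
  simp only [transfer]
  rw [← ptr_E1_E2, ← ptr_E2_E1, main]

end
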